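/- Main impossibility result (Theorem 3.1). Fix a number of players n ≥ 1, a mechanism M = (M_out, M_pay), and nonnegative privacy loss functions λ_1, …, λ_n (i.e., λ_i ≥ 0 everywhere). Suppose each λ_i respects indifference and is increasing for δ-distinguishability for some δ ≤ 1/(6n). Suppose M is individually rational; M has finite payments when all players are privacy-indifferent, i.e., Pay_i(b, 0^n) is finite for all b ∈ {0,1}^n and all i; and M is truthful for every input (b,v) and player i with v_i = 0. Then M is not (1/2, 1/3)-accurate on both of the inputs (0^n, 0^n) and (1^n, 0^n). -/

import Mathlib

open MeasureTheory
open scoped ENNReal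

noncomputable section

attribute [local instance] Classical.propDecidable

/-- Expectation of a real-valued function under a `PMF`. -/
def PMF.expect {α : Type*} [MeasurableSpace α] (p : PMF α) (f : α → ℝ) : ℝ :=
  ∫ x, f x ∂p.toMeasure

/-- Total variation (statistical) distance between two distributions:
`Δ(p,q) = sup_S |p(S) - q(S)|`. -/
def tvDist {α : Type*} (p q : PMF α) : ℝ :=
  ⨆ S : Set α, |(p.toOuterMeasure S).toReal - (q.toOuterMeasure S).toReal|

/-- A mechanism on `n` players: a randomized function producing an integer output
(an estimate of the sum of the data bits) together with payments to the `n` players. -/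
structure Mech (n : ℕ) where
  run : (Fin n → Bool) → (Fin n → ℝ) → PMF (ℤ × (Fin n → ℝ))

namespace Mech

variable {n : ℕ}

/-- The output part `M_out`. -/
def out (M : Mech n) (b : Fin n → Bool) (v : Fin n → ℝ) : PMF ℤ :=
  (M.run b v).map Prod.fst

/-- The payment part `M_pay`. -/
def payPMF (M : Mech n) (b : Fin n → Bool) (v : Fin n → ℝ) : PMF (Fin n → ℝ) :=
  (M.run b v).map Prod.snd

/-- `Pay_i(b,v)`: the expected payment to player `i`. -/
def pay (M : Mech n) (b : Fin n → Bool) (v : Fin n → ℝ) (i : Fin n) : ℝ :=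
  (M.payPMF b v).expect (fun p => p i)

/-- `M_{-i}`: the output together with the payments to all players other than `i`. -/
def minus (M : Mech n) (i : Fin n) (b : Fin n → Bool) (v : Fin n → ℝ) :
    PMF (ℤ × ({j : Fin n // j ≠ i} → ℝ)) :=
  (M.run b v).map (fun sp => (sp.1, fun j => sp.2 j.1))

end Mech

/-- The type of privacy loss functions `λ_i(b, v, v'_i, s, p_{-i})` for player `i`. -/
abbrev LossFn (n : ℕ) (i : Fin n) : Type :=
  (Fin n → Bool) → (Fin n → ℝ) → ℝ → ℤ → ({j : Fin n // j ≠ i} → ℝ) → ℝ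

/-- `Loss_i(b, v, v'_i)`: the expected privacy loss of player `i` with true types `(b,v)`
and declaration `v'_i`. -/
def lossOf {n : ℕ} (M : Mech n) {i : Fin n} (lam : LossFn n i)
    (b : Fin n → Bool) (v : Fin n → ℝ) (v'i : ℝ) : ℝ :=
  (M.run b (Function.update v i v'i)).expect
    (fun sp => lam b v v'i sp.1 (fun j => sp.2 j.1))

/-- `i`-neighbors: inputs agreeing in all coordinates `j ≠ i`. -/
def iNeighbor {n : ℕ} (i : Fin n) (x y : (Fin n → Bool) × (Fin n → ℝ)) : Prop :=
  ∀ j, j ≠ i → x.1 j = y.1 j ∧ x.2 j = y.2 j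

/-- Neighbors: `i`-neighbors for some `i`. -/
def Neighbor {n : ℕ} (x y : (Fin n → Bool) × (Fin n → ℝ)) : Prop :=
  ∃ i, iNeighbor i x y

/-- Monotonically related player types. -/
def monRelated (t t' : Bool × ℝ) : Prop :=
  (t.1 = false ∧ t'.1 = true ∧ t.2 ≤ t'.2) ∨ (t.1 = true ∧ t'.1 = false ∧ t'.2 ≤ t.2)

/-- Monotonic `i`-neighbors. -/
def monINeighbor {n : ℕ} (i : Fin n) (x y : (Fin n → Bool) × (Fin n → ℝ)) : Prop :=
  iNeighbor i x y ∧ monRelated (x.1 i, x.2 i) (y.1 i, y.2 i)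

/-- `(b,v)` is `δ`-distinguishable for player `i` with respect to `f`. -/
def distinguishable {n : ℕ} {α : Type*} (δ : ℝ)
    (f : (Fin n → Bool) → (Fin n → ℝ) → PMF α) (i : Fin n)
    (b : Fin n → Bool) (v : Fin n → ℝ) : Prop :=
  ∃ y : (Fin n → Bool) × (Fin n → ℝ), iNeighbor i (b, v) y ∧ δ ≤ tvDist (f b v) (f y.1 y.2)

/-- `(b,v)` is `δ`-monotonically distinguishable for player `i` with respect to `f`. -/
def monDistinguishable {n : ℕ} {α : Type*} (δ : ℝ)
    (f : (Fin n → Bool) → (Fin n → ℝ) → PMF α) (i : Fin n)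
    (b : Fin n → Bool) (v : Fin n → ℝ) : Prop :=
  ∃ y : (Fin n → Bool) × (Fin n → ℝ), monINeighbor i (b, v) y ∧ δ ≤ tvDist (f b v) (f y.1 y.2)

/-- `λ_i` respects indifference. -/
def respectsIndifference {n : ℕ} (M : Mech n) {i : Fin n} (lam : LossFn n i) : Prop :=
  ∀ b v, v i = 0 → ∀ v' v'', lossOf M lam b v v' = lossOf M lam b v v''

/-- `λ_i` is increasing for `δ`-distinguishability. -/
def increasingFor {n : ℕ} (M : Mech n) {i : Fin n} (lam : LossFn n i) (δ : ℝ) : Prop :=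
  ∃ T : ℝ → (Fin n → Bool) → ({j : Fin n // j ≠ i} → ℝ) → ℝ,
    ∀ ℓ, 0 < ℓ → ∀ (b : Fin n → Bool) (v : Fin n → ℝ),
      T ℓ b (fun j => v j.1) ≤ v i →
      distinguishable δ M.out i b v →
      ℓ < lossOf M lam b v (v i)

/-- `λ_i` is increasing for `δ`-monotonic distinguishability. -/
def increasingForMon {n : ℕ} (M : Mech n) {i : Fin n} (lam : LossFn n i) (δ : ℝ) : Prop :=
  ∃ T : ℝ → (Fin n → Bool) → ({j : Fin n // j ≠ i} → ℝ) → ℝ,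
    ∀ ℓ, 0 < ℓ → ∀ (b : Fin n → Bool) (v : Fin n → ℝ),
      T ℓ b (fun j => v j.1) ≤ v i →
      monDistinguishable δ M.out i b v →
      ℓ < lossOf M lam b v (v i)

/-- `M` is individually rational. -/
def indivRational {n : ℕ} (M : Mech n) (lam : ∀ i : Fin n, LossFn n i) : Prop :=
  ∀ b v i, lossOf M (lam i) b v (v i) ≤ M.pay b v i

/-- `M` is truthful for input `(b,v)` and player `i`. -/
def truthfulAt {n : ℕ} (M : Mech n) {i : Fin n} (lam : LossFn n i)
    (b : Fin n → Bool) (v : Fin n → ℝ) : Prop :=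
  ∀ v'i : ℝ,
    M.pay b (Function.update v i v'i) i - lossOf M lam b v v'i ≤
      M.pay b v i - lossOf M lam b v (v i)

/-- The average `b̄` of the data bits. -/
def bbar {n : ℕ} (b : Fin n → Bool) : ℝ := (∑ i, if b i then (1 : ℝ) else 0) / n

/-- `M` is `([a, a'], β)`-accurate on input `(b,v)`. -/
def accurate {n : ℕ} (M : Mech n) (a a' β : ℝ) (b : Fin n → Bool) (v : Fin n → ℝ) : Prop :=
  ((M.out b v).toOuterMeasure
      {s : ℤ | ¬((bbar b - a) * n < (s : ℝ) ∧ (s : ℝ) < (bbar b + a') * n)}).toReal ≤ β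

/-- `G` is the symmetric geometric distribution `Geom(ε)` on `ℤ`, with
`Pr[X = k] = (1-e^{-ε})/(1+e^{-ε}) · e^{-ε|k|}`. -/
def isGeom (ε : ℝ) (G : PMF ℤ) : Prop :=
  ∀ k : ℤ, G k =
    ENNReal.ofReal ((1 - Real.exp (-ε)) / (1 + Real.exp (-ε)) * Real.exp (-ε * |(k : ℝ)|))

/-- The monotonic-valuations mechanism `M_{B,ε}` (Algorithm 1): data bits of players with
`2εv_i > B/n` are treated as 0, the output is the resulting sum plus `Geom(ε)` noise, and
each player with `2εv_i ≤ B/n` is paid `B/n` (others are paid nothing). -/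
def monMech (n : ℕ) (B ε : ℝ) (G : PMF ℤ) : Mech n where
  run b v := G.map (fun x =>
    ((∑ i, if b i = true ∧ 2 * ε * v i ≤ B / n then (1 : ℤ) else 0) + x,
      fun i => if 2 * ε * v i ≤ B / n then B / n else 0))

/-- The modified mechanism `M'` of Theorem 4.3: identical to `M_{B,ε}` except that all
players with data bit 0 are paid `B/n`, even those with large privacy valuations. -/
def monMech' (n : ℕ) (B ε : ℝ) (G : PMF ℤ) : Mech n where
  run b v := G.map (fun x =>
    ((∑ i, if b i = true ∧ 2 * ε * v i ≤ B / n then (1 : ℤ) else 0) + x,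
      fun i => if 2 * ε * v i ≤ B / n ∨ b i = false then B / n else 0))

/-- The log-ratio of point probabilities of `M_{-i}` between `(b,v)` and the input where
player `i`'s type is replaced by `(b''_i, v''_i)`. -/
def logRatio {n : ℕ} (M : Mech n) (i : Fin n) (b : Fin n → Bool) (v : Fin n → ℝ)
    (b''i : Bool) (v''i : ℝ) (s : ℤ) (p : {j : Fin n // j ≠ i} → ℝ) : ℝ :=
  Real.log ((M.minus i b v (s, p)).toReal /
    (M.minus i (Function.update b i b''i) (Function.update v i v''i) (s, p)).toReal)

/-- `λ_i` is bounded by differential privacy for monotonic valuations. -/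
def boundedByDPMon {n : ℕ} (M : Mech n) {i : Fin n} (lam : LossFn n i) : Prop :=
  ∀ b v v'i s p,
    |lam b v v'i s p| ≤
      v i * ⨆ t : {t : Bool × ℝ // monRelated (b i, v i) t},
        logRatio M i b v t.1.1 t.1.2 s p

/-- `λ_i` respects identical output distributions. -/
def respectsIdentical {n : ℕ} (M : Mech n) {i : Fin n} (lam : LossFn n i) : Prop :=
  ∀ b v v'i, M.minus i b v = M.minus i b (Function.update v i v'i) →
    ∀ s p, lam b v v'i s p = lam b v (v i) s p

/-- `λ_i` is growing with statistical distance for monotonic neighbors. -/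
def growingMon {n : ℕ} (M : Mech n) {i : Fin n} (lam : LossFn n i) : Prop :=
  ∀ b v y, monINeighbor i (b, v) y →
    v i * tvDist (M.out b v) (M.out y.1 y.2) ≤ lossOf M lam b v (v i)

section AuxTV

variable {α : Type*}

lemma pmf_outer_le_one (p : PMF α) (S : Set α) : p.toOuterMeasure S ≤ 1 := by
  rw [PMF.toOuterMeasure_apply]
  calc ∑' x, S.indicator p x ≤ ∑' x, p x :=
        ENNReal.tsum_le_tsum (fun x => Set.indicator_le_self _ _ x)
    _ = 1 := p.tsum_coe

lemma pmf_outer_ne_top (p : PMF α) (S : Set α) : p.toOuterMeasure S ≠ ⊤ :=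
  ((pmf_outer_le_one p S).trans_lt ENNReal.one_lt_top).ne

lemma pmf_outer_toReal_le_one (p : PMF α) (S : Set α) :
    (p.toOuterMeasure S).toReal ≤ 1 := by
  have := ENNReal.toReal_mono (by simp) (pmf_outer_le_one p S)
  simpa using this

lemma abs_diff_le_one (p q : PMF α) (S : Set α) :
    |(p.toOuterMeasure S).toReal - (q.toOuterMeasure S).toReal| ≤ 1 := by
  rw [abs_sub_le_iff]
  constructor <;>
    [have h1 := pmf_outer_toReal_le_one p S; have h1 := pmf_outer_toReal_le_one q S] <;>
    [have h2 := ENNReal.toReal_nonneg (a := q.toOuterMeasure S);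
     have h2 := ENNReal.toReal_nonneg (a := p.toOuterMeasure S)] <;> linarith

lemma tvDist_bdd (p q : PMF α) :
    BddAbove (Set.range fun S : Set α =>
      |(p.toOuterMeasure S).toReal - (q.toOuterMeasure S).toReal|) :=
  ⟨1, by rintro x ⟨S, rfl⟩; exact abs_diff_le_one p q S⟩

lemma le_tvDist (p q : PMF α) (S : Set α) :
    |(p.toOuterMeasure S).toReal - (q.toOuterMeasure S).toReal| ≤ tvDist p q :=
  le_ciSup (tvDist_bdd p q) S

lemma tvDist_nonneg (p q : PMF α) : 0 ≤ tvDist p q :=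
  (abs_nonneg _).trans (le_tvDist p q ∅)

lemma tvDist_self (p : PMF α) : tvDist p p = 0 := by
  refine le_antisymm ?_ (tvDist_nonneg p p)
  refine ciSup_le fun S => by simp

lemma tvDist_comm (p q : PMF α) : tvDist p q = tvDist q p := by
  unfold tvDist
  congr 1; funext S; exact abs_sub_comm _ _

lemma tvDist_triangle (p q r : PMF α) : tvDist p r ≤ tvDist p q + tvDist q r := by
  refine ciSup_le fun S => ?_
  calc |(p.toOuterMeasure S).toReal - (r.toOuterMeasure S).toReal|
      ≤ |(p.toOuterMeasure S).toReal - (q.toOuterMeasure S).toReal| +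
        |(q.toOuterMeasure S).toReal - (r.toOuterMeasure S).toReal| := abs_sub_le _ _ _
    _ ≤ tvDist p q + tvDist q r := add_le_add (le_tvDist p q S) (le_tvDist q r S)

lemma pmf_outer_add_compl (p : PMF α) (S : Set α) :
    p.toOuterMeasure S + p.toOuterMeasure Sᶜ = 1 := by
  rw [PMF.toOuterMeasure_apply, PMF.toOuterMeasure_apply, ← ENNReal.tsum_add, ← p.tsum_coe]
  congr 1; funext x
  by_cases h : x ∈ S <;> simp [Set.indicator, h]

lemma pmf_outer_compl_toReal (p : PMF α) (S : Set α) :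
    (p.toOuterMeasure Sᶜ).toReal = 1 - (p.toOuterMeasure S).toReal := by
  have h := congrArg ENNReal.toReal (pmf_outer_add_compl p S)
  rw [ENNReal.toReal_add (pmf_outer_ne_top p S) (pmf_outer_ne_top p Sᶜ)] at h
  simp only [ENNReal.toReal_one] at h
  linarith

end AuxTV

/-- **Main impossibility result (Theorem 3.1).** -/
theorem main_impossibility (n : ℕ) (hn : 1 ≤ n) (M : Mech n)
    (lam : ∀ i : Fin n, LossFn n i)
    (hnonneg : ∀ (i : Fin n) b v v'i s p, 0 ≤ lam i b v v'i s p)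
    (δ : ℝ) (hδ : δ ≤ 1 / (6 * n))
    (hindiff : ∀ i : Fin n, respectsIndifference M (lam i))
    (hincr : ∀ i : Fin n, increasingFor M (lam i) δ)
    (hIR : indivRational M lam)
    (hfin : ∀ (b : Fin n → Bool) (i : Fin n),
      Integrable (fun p => p i) ((M.payPMF b (fun _ => 0)).toMeasure))
    (htruth : ∀ (b : Fin n → Bool) (v : Fin n → ℝ) (i : Fin n), v i = 0 →
      truthfulAt M (lam i) b v) :
    ¬ (accurate M (1/2) (1/2) (1/3) (fun _ => false) (fun _ => 0) ∧
       accurate M (1/2) (1/2) (1/3) (fun _ => true) (fun _ => 0)) := by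
  rintro ⟨hacc0, hacc1⟩
  have hN1 : (1:ℝ) ≤ (n:ℝ) := by exact_mod_cast hn
  have hNpos : (0:ℝ) < (n:ℝ) := by linarith
  set zero : Fin n → ℝ := fun _ => 0 with hzero
  have hzero0 : ∀ j, zero j = 0 := fun j => rfl
  set b0 : Fin n → Bool := fun _ => false with hb0
  set b1 : Fin n → Bool := fun _ => true with hb1
  -- Averages
  have hbbar0 : bbar b0 = 0 := by simp [bbar, hb0]
  have hbbar1 : bbar b1 = 1 := by
    simp [bbar, hb1]
    omega
  -- Step 1: TV distance at the two extreme inputs is at least 1/3.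
  unfold accurate at hacc0 hacc1
  set Bad0 : Set ℤ := {s : ℤ | ¬((bbar b0 - 1/2) * (n:ℝ) < (s:ℝ) ∧
    (s:ℝ) < (bbar b0 + 1/2) * (n:ℝ))} with hBad0
  set Bad1 : Set ℤ := {s : ℤ | ¬((bbar b1 - 1/2) * (n:ℝ) < (s:ℝ) ∧
    (s:ℝ) < (bbar b1 + 1/2) * (n:ℝ))} with hBad1
  have hP0 : 2/3 ≤ (((M.out b0 zero).toOuterMeasure Bad0ᶜ)).toReal := by
    rw [pmf_outer_compl_toReal]
    linarith
  have hsub : Bad0ᶜ ⊆ Bad1 := by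
    intro s hs
    simp only [hBad0, hBad1, Set.mem_compl_iff, Set.mem_setOf_eq, not_not] at hs ⊢
    rw [hbbar0] at hs
    rw [hbbar1]
    intro hcon
    have h1 := hs.2
    have h2 := hcon.1
    have : (0 + 1/2) * (n:ℝ) = (1 - 1/2) * (n:ℝ) := by ring
    linarith
  have hP1 : (((M.out b1 zero).toOuterMeasure Bad0ᶜ)).toReal ≤ 1/3 :=
    le_trans (ENNReal.toReal_mono (pmf_outer_ne_top _ _)
      (((M.out b1 zero).toOuterMeasure).mono hsub)) hacc1
  have htv13 : 1/3 ≤ tvDist (M.out b0 zero) (M.out b1 zero) := by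
    have h := le_tvDist (M.out b0 zero) (M.out b1 zero) Bad0ᶜ
    have h2 := le_abs_self ((((M.out b0 zero).toOuterMeasure Bad0ᶜ)).toReal -
      (((M.out b1 zero).toOuterMeasure Bad0ᶜ)).toReal)
    linarith
  -- Step 2: hybrid argument.
  set q : ℕ → PMF ℤ := fun k => M.out (fun j => decide ((j:ℕ) < k)) zero with hq
  have hq0 : q 0 = M.out b0 zero := by
    have : (fun j : Fin n => decide ((j:ℕ) < 0)) = b0 := by
      funext j; simp [hb0]
    show M.out (fun j : Fin n => decide ((j:ℕ) < 0)) zero = M.out b0 zero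
    rw [this]
  have hqn : q n = M.out b1 zero := by
    have : (fun j : Fin n => decide ((j:ℕ) < n)) = b1 := by
      funext j; simp [hb1, j.isLt]
    show M.out (fun j : Fin n => decide ((j:ℕ) < n)) zero = M.out b1 zero
    rw [this]
  have chain : ∀ m, tvDist (q 0) (q m) ≤ ∑ k ∈ Finset.range m, tvDist (q k) (q (k+1)) := by
    intro m
    induction m with
    | zero => simp [tvDist_self]
    | succ m ih =>
      calc tvDist (q 0) (q (m+1)) ≤ tvDist (q 0) (q m) + tvDist (q m) (q (m+1)) :=
            tvDist_triangle _ _ _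
        _ ≤ _ := by rw [Finset.sum_range_succ]; linarith
  have hex : ∃ k, k < n ∧ 1/(3*(n:ℝ)) ≤ tvDist (q k) (q (k+1)) := by
    by_contra hcon
    push_neg at hcon
    have hne : (Finset.range n).Nonempty := by
      rw [Finset.nonempty_range_iff]; omega
    have hsum : ∑ k ∈ Finset.range n, tvDist (q k) (q (k+1)) <
        ∑ _k ∈ Finset.range n, 1/(3*(n:ℝ)) :=
      Finset.sum_lt_sum_of_nonempty hne
        (fun k hk => hcon k (Finset.mem_range.1 hk))
    rw [Finset.sum_const, Finset.card_range, nsmul_eq_mul] at hsum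
    have heq : (n:ℝ) * (1/(3*(n:ℝ))) = 1/3 := by
      field_simp
    have := chain n
    rw [hq0, hqn] at this
    linarith
  obtain ⟨k, hk, hkTV⟩ := hex
  set i : Fin n := ⟨k, hk⟩ with hi
  set b : Fin n → Bool := fun j => decide ((j:ℕ) < k) with hb
  set b' : Fin n → Bool := Function.update b i true with hb'
  have hstep : (fun j : Fin n => decide ((j:ℕ) < k+1)) = b' := by
    funext j
    by_cases hji : j = i
    · subst hji
      rw [hb', Function.update_self]
      simp [hi]
    · rw [hb', Function.update_of_ne hji, hb]
      have hjk : (j:ℕ) ≠ k := fun h => hji (Fin.ext (by simp [hi, h]))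
      apply decide_eq_decide.mpr
      constructor
      · intro h
        rcases Nat.lt_succ_iff_lt_or_eq.1 h with h' | h'
        · exact h'
        · exact absurd h' hjk
      · intro h; exact Nat.lt_succ_of_lt h
  have hkTV' : 1/(3*(n:ℝ)) ≤ tvDist (M.out b zero) (M.out b' zero) := by
    have h1 : q k = M.out b zero := rfl
    have h2 : q (k+1) = M.out b' zero := by
      show M.out (fun j : Fin n => decide ((j:ℕ) < k+1)) zero = M.out b' zero
      rw [hstep]
    rw [h1, h2] at hkTV
    exact hkTV
  -- Step 3: a player with a huge valuation.
  obtain ⟨T, hT⟩ := hincr i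
  set ℓ : ℝ := max (M.pay b zero i) 0 + 1 with hℓ
  have hℓpos : 0 < ℓ := by
    have := le_max_right (M.pay b zero i) 0
    rw [hℓ]; linarith
  set t : ℝ := T ℓ b (fun _ => 0) with ht
  set v : Fin n → ℝ := Function.update zero i t with hv
  have hvj : ∀ j : Fin n, j ≠ i → v j = 0 := by
    intro j hj
    rw [hv, Function.update_of_ne hj]
  have hvi : v i = t := by rw [hv, Function.update_self]
  have hvrestrict : (fun j : {j : Fin n // j ≠ i} => v j.1) = fun _ => 0 := by
    funext j; exact hvj j.1 j.2
  have hvT : T ℓ b (fun j : {j : Fin n // j ≠ i} => v j.1) ≤ v i := by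
    rw [hvrestrict, hvi, ht]
  have hδ' : δ ≤ 1/(6*(n:ℝ)) := hδ
  have hdist : distinguishable δ M.out i b v := by
    have tri : tvDist (M.out b zero) (M.out b' zero) ≤
        tvDist (M.out b zero) (M.out b v) + tvDist (M.out b v) (M.out b' zero) :=
      tvDist_triangle _ _ _
    rcases le_or_gt (1/(6*(n:ℝ))) (tvDist (M.out b v) (M.out b' zero)) with h | h
    · refine ⟨(b', zero), ?_, hδ'.trans h⟩
      intro j hj
      refine ⟨?_, ?_⟩
      · show b j = Function.update b i true j
        rw [Function.update_of_ne hj]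
      · show v j = zero j
        rw [hvj j hj, hzero0 j]
    · have h6 : 1/(6*(n:ℝ)) ≤ tvDist (M.out b zero) (M.out b v) := by
        have : 1/(3*(n:ℝ)) = 1/(6*(n:ℝ)) + 1/(6*(n:ℝ)) := by field_simp; ring
        linarith
      refine ⟨(b, zero), ?_, hδ'.trans (by rwa [tvDist_comm])⟩
      intro j hj
      refine ⟨rfl, ?_⟩
      show v j = zero j
      rw [hvj j hj, hzero0 j]
  have hloss : ℓ < lossOf M (lam i) b v (v i) := hT ℓ hℓpos b v hvT hdist
  have hIR' : lossOf M (lam i) b v (v i) ≤ M.pay b v i := hIR b v i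
  have htr := htruth b zero i (hzero0 i) t
  have hind := hindiff i b zero (hzero0 i) t (zero i)
  have hpay : M.pay b v i ≤ M.pay b zero i := by
    have hupd : Function.update zero i t = v := hv.symm
    rw [hupd, hind] at htr
    linarith
  have hmax := le_max_left (M.pay b zero i) 0
  rw [hℓ] at hloss
  linarith
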